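/- Let a commutative square in Cat be given, with top-left vertex T, functors H : T ⥤ S and H' : T ⥤ S', and bottom cospan G : S ⥤ V, K : S' ⥤ V, such that the square is a pullback square (in the sense of CategoryTheory.IsPullback in the category Cat). If G is a discrete opfibration, then the opposite leg H' : T ⥤ S' is a discrete opfibration. -/

import Mathlib

open CategoryTheory

universe v u v₂ u₂

structure Two' : Type u where
  b : Bool
  ph : Nonempty (ULift.{v} Unit)

def Two'.t0 : Two'.{v, u} := ⟨false, ⟨⟨()⟩⟩⟩
def Two'.t1 : Two'.{v, u} := ⟨true, ⟨⟨()⟩⟩⟩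

instance : Category.{v} Two'.{v, u} where
  Hom x y := ULift (PLift (x.b ≤ y.b))
  id _ := ⟨⟨le_refl _⟩⟩
  comp f g := ⟨⟨le_trans f.down.down g.down.down⟩⟩

instance (x y : Two'.{v, u}) : Subsingleton (x ⟶ y) :=
  ⟨fun f g => congrArg ULift.up (congrArg PLift.up (Subsingleton.elim _ _))⟩

lemma Two'.obj_ext {x y : Two'.{v, u}} (h : x.b = y.b) : x = y := by
  cases x; cases y; cases Subsingleton.elim ‹Nonempty _› ‹Nonempty _›; cases h; rfl

lemma Two'.noHom {x y : Two'.{v, u}} (hx : x.b = true) (hy : y.b = false)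
    (g : x ⟶ y) : False := by
  have := g.down.down; rw [hx, hy] at this; exact (by decide : ¬ (true ≤ false)) this

def Two'.arr : Two'.t0.{v, u} ⟶ Two'.t1 := ⟨⟨by simp [Two'.t0, Two'.t1]⟩⟩

variable {C : Type u₂} [Category.{v₂} C]

def pick {X Y : C} (f : X ⟶ Y) : Two'.{v, u} ⥤ C where
  obj x := bif x.b then Y else X
  map {x y} g :=
    match x, y, g with
    | ⟨false, _⟩, ⟨false, _⟩, _ => 𝟙 X
    | ⟨false, _⟩, ⟨true, _⟩, _ => f
    | ⟨true, _⟩, ⟨true, _⟩, _ => 𝟙 Y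
    | ⟨true, _⟩, ⟨false, _⟩, g => (Two'.noHom rfl rfl g).elim
  map_id x := by
    rcases x with ⟨_ | _, _⟩ <;> rfl
  map_comp {x y z} g h := by
    rcases x with ⟨_ | _, _⟩ <;> rcases y with ⟨_ | _, _⟩ <;> rcases z with ⟨_ | _, _⟩ <;>
      first
        | exact ((Two'.noHom rfl rfl g).elim : _)
        | exact ((Two'.noHom rfl rfl h).elim : _)
        | simp

lemma Two'.cases (x : Two'.{v, u}) : x = Two'.t0 ∨ x = Two'.t1 := by
  rcases x with ⟨_ | _, _⟩
  · exact Or.inl (Two'.obj_ext rfl)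
  · exact Or.inr (Two'.obj_ext rfl)

lemma Two'.functor_ext {F G' : Two'.{v, u} ⥤ C}
    (h0 : F.obj Two'.t0 = G'.obj Two'.t0) (h1 : F.obj Two'.t1 = G'.obj Two'.t1)
    (hm : F.map Two'.arr = eqToHom h0 ≫ G'.map Two'.arr ≫ eqToHom h1.symm) : F = G' := by
  have hobj : ∀ x, F.obj x = G'.obj x := by
    intro x
    rcases Two'.cases x with rfl | rfl
    · exact h0
    · exact h1
  refine CategoryTheory.Functor.ext hobj (fun x y f => ?_)
  rcases Two'.cases x with rfl | rfl <;> rcases Two'.cases y with rfl | rfl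
  · have : f = 𝟙 Two'.t0 := Subsingleton.elim _ _
    subst this; simp [eqToHom_map]
  · have : f = Two'.arr := Subsingleton.elim _ _
    subst this; exact hm
  · exact (Two'.noHom rfl rfl f).elim
  · have : f = 𝟙 Two'.t1 := Subsingleton.elim _ _
    subst this; simp [eqToHom_map]

lemma pick_comp {D : Type*} [Category D] {X Y : C} (f : X ⟶ Y) (F : C ⥤ D) :
    pick.{v, u} f ⋙ F = pick (F.map f) := by
  refine Two'.functor_ext (h0 := rfl) (h1 := rfl) ?_
  simp [pick, Two'.arr, Two'.t0, Two'.t1]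
  exact (Category.id_comp _).symm

lemma pick_congr {X₁ Y₁ X₂ Y₂ : C} {f₁ : X₁ ⟶ Y₁} {f₂ : X₂ ⟶ Y₂}
    (hX : X₁ = X₂) (hY : Y₁ = Y₂) (hf : f₁ ≫ eqToHom hY = eqToHom hX ≫ f₂) :
    pick.{v, u} f₁ = pick f₂ := by
  subst hX; subst hY
  simp only [eqToHom_refl, Category.comp_id, Category.id_comp] at hf
  rw [hf]

lemma pick_src {X₁ Y₁ X₂ Y₂ : C} {f₁ : X₁ ⟶ Y₁} {f₂ : X₂ ⟶ Y₂}
    (h : pick.{v, u} f₁ = pick f₂) : X₁ = X₂ :=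
  Functor.congr_obj h Two'.t0

lemma pick_tgt {X₁ Y₁ X₂ Y₂ : C} {f₁ : X₁ ⟶ Y₁} {f₂ : X₂ ⟶ Y₂}
    (h : pick.{v, u} f₁ = pick f₂) : Y₁ = Y₂ :=
  Functor.congr_obj h Two'.t1

lemma pick_hom {X₁ Y₁ X₂ Y₂ : C} {f₁ : X₁ ⟶ Y₁} {f₂ : X₂ ⟶ Y₂}
    (h : pick.{v, u} f₁ = pick f₂) :
    f₁ = eqToHom (pick_src h) ≫ f₂ ≫ eqToHom (pick_tgt h).symm :=
  Functor.congr_hom h Two'.arr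

def pickCat {S : Cat.{v, u}} {X Y : ↑S} (f : X ⟶ Y) : Cat.of Two'.{v, u} ⟶ S :=
  (pick f).toCatHom

/-- A functor `F : C ⥤ D` is a discrete opfibration if for every object `c` of `C` and
every morphism `g : F.obj c ⟶ d` in `D`, there is a unique pair of an object `c'` and a
morphism `f : c ⟶ c'` with `F.obj c' = d` and `F.map f ≫ eqToHom _ = g`. -/
def IsDiscreteOpfib {C : Type*} [Category C] {D : Type*} [Category D] (F : C ⥤ D) : Prop :=
  ∀ (c : C) ⦃d : D⦄ (g : F.obj c ⟶ d),
    ∃! p : (c' : C) × (c ⟶ c'), ∃ h : F.obj p.1 = d, F.map p.2 ≫ eqToHom h = g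

theorem discreteOpfib_of_isPullback {T S S' V : Cat}
    (H : T ⟶ S) (H' : T ⟶ S') (G : S ⟶ V) (K : S' ⟶ V)
    (hpb : IsPullback H H' G K) (hG : IsDiscreteOpfib G.toFunctor) :
    IsDiscreteOpfib H'.toFunctor := by
  intro t d g
  have hw : H.toFunctor ⋙ G.toFunctor = H'.toFunctor ⋙ K.toFunctor := congrArg Cat.Hom.toFunctor hpb.w
  have hobj : G.toFunctor.obj (H.toFunctor.obj t) = K.toFunctor.obj (H'.toFunctor.obj t) := Functor.congr_obj hw t
  set g₀ : G.toFunctor.obj (H.toFunctor.obj t) ⟶ K.toFunctor.obj d := eqToHom hobj ≫ K.toFunctor.map g with hg₀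
  obtain ⟨⟨s, fS⟩, ⟨hs, hfS⟩, huniq⟩ := hG (H.toFunctor.obj t) g₀
  -- the cone over the cospan
  have w : pickCat fS ≫ G = pickCat g ≫ K := by
    apply Cat.Hom.ext
    show pick fS ⋙ G.toFunctor = pick g ⋙ K.toFunctor
    rw [pick_comp, pick_comp]
    exact pick_congr hobj hs (by rw [hfS, hg₀])
  set L : Cat.of Two' ⟶ T := hpb.lift (pickCat fS) (pickCat g) w with hLdef
  have hL1 : L.toFunctor ⋙ H.toFunctor = pick fS := congrArg Cat.Hom.toFunctor (hpb.lift_fst _ _ _)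
  have hL2 : L.toFunctor ⋙ H'.toFunctor = pick g := congrArg Cat.Hom.toFunctor (hpb.lift_snd _ _ _)
  -- the source of the lifted arrow is `t`
  have hsrc : L.toFunctor.obj Two'.t0 = t := by
    have hM : pickCat (S := Cat.of Two') (𝟙 Two'.t0) ≫ L = pickCat (𝟙 t) := by
      apply hpb.hom_ext
      · apply Cat.Hom.ext
        show pick (𝟙 Two'.t0) ⋙ (L.toFunctor ⋙ H.toFunctor) = pick (𝟙 t) ⋙ H.toFunctor
        erw [hL1, pick_comp, pick_comp]
        exact pick_congr rfl rfl (by simp)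
      · apply Cat.Hom.ext
        show pick (𝟙 Two'.t0) ⋙ (L.toFunctor ⋙ H'.toFunctor) = pick (𝟙 t) ⋙ H'.toFunctor
        erw [hL2, pick_comp, pick_comp]
        exact pick_congr rfl rfl (by simp)
    exact Functor.congr_obj (congrArg Cat.Hom.toFunctor hM) Two'.t1
  have ht' : H'.toFunctor.obj (L.toFunctor.obj Two'.t1) = d := Functor.congr_obj hL2 Two'.t1
  have ht0 : H'.toFunctor.obj (L.toFunctor.obj Two'.t0) = H'.toFunctor.obj t := Functor.congr_obj hL2 Two'.t0
  have harr : H'.toFunctor.map (L.toFunctor.map Two'.arr) = eqToHom ht0 ≫ g ≫ eqToHom ht'.symm :=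
    Functor.congr_hom hL2 Two'.arr
  refine ⟨⟨L.toFunctor.obj Two'.t1, eqToHom hsrc.symm ≫ L.toFunctor.map Two'.arr⟩, ⟨ht', ?_⟩, ?_⟩
  · rw [Functor.map_comp, harr, eqToHom_map]
    simp
  · rintro ⟨t'', f⟩ ⟨hd, hm⟩
    -- the candidate lift
    have claim2 : pick f ⋙ H'.toFunctor = pick g := by
      rw [pick_comp]
      exact pick_congr rfl hd (by simpa using hm)
    have hGuniq : (⟨H.toFunctor.obj t'', H.toFunctor.map f⟩ : (c' : ↑S) × (H.toFunctor.obj t ⟶ c')) = ⟨s, fS⟩ := by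
      apply huniq
      refine ⟨(Functor.congr_obj hw t'').trans (congrArg K.toFunctor.obj hd), ?_⟩
      have h1 : G.toFunctor.map (H.toFunctor.map f)
          = eqToHom (Functor.congr_obj hw t) ≫ K.toFunctor.map (H'.toFunctor.map f)
              ≫ eqToHom (Functor.congr_obj hw t'').symm := Functor.congr_hom hw f
      have h2 : H'.toFunctor.map f = g ≫ eqToHom hd.symm := by
        rw [← hm]; simp
      rw [h1, h2, hg₀]
      simp [eqToHom_map]
    have claim1 : pick f ⋙ H.toFunctor = pick fS := by
      rw [pick_comp]
      exact congrArg (fun p : (c' : ↑S) × (H.toFunctor.obj t ⟶ c') => pick p.2) hGuniq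
    have hLL : pickCat f = L :=
      hpb.hom_ext (Cat.Hom.ext (claim1.trans hL1.symm)) (Cat.Hom.ext (claim2.trans hL2.symm))
    have h1 : t'' = L.toFunctor.obj Two'.t1 := Functor.congr_obj (congrArg Cat.Hom.toFunctor hLL) Two'.t1
    have h2 : f = eqToHom (Functor.congr_obj (congrArg Cat.Hom.toFunctor hLL) Two'.t0)
        ≫ L.toFunctor.map Two'.arr ≫ eqToHom h1.symm := Functor.congr_hom (congrArg Cat.Hom.toFunctor hLL) Two'.arr
    subst h1
    refine congrArg (Sigma.mk (L.toFunctor.obj Two'.t1)) ?_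
    rw [h2]
    simp
    rfl
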